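/- Fix an integer n ≥ 1, a field 𝔽 and elements t, s ∈ 𝔽 with t ≠ s. Let R(t,s) be the trigonometric R-matrix and, for n×n matrices A, B over 𝔽, let C := (A⊗B)·R(t,s) − R(t,s)·(A⊗B). Then for all indices 1 ≤ p < p̄ ≤ n and 1 ≤ q < q̄ ≤ n, the ((p,p̄),(q,q̄)) entry of C equals 2·(t·B_{p q̄}·A_{p̄ q} − s·A_{p q̄}·B_{p̄ q})/(t − s). (With A = A(t) and B = A(s), this is the Sklyanin bracket formula {a_{pq}(t), a_{p̄ q̄}(s)} = 2(t a_{p q̄}(s) a_{p̄ q}(t) − s a_{p q̄}(t) a_{p̄ q}(s))/(t−s).) -/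

import Mathlib

open Matrix Kronecker

/-- The `n×n` matrix unit `E_{ij}`. -/
def matrixUnit {𝔽 : Type*} [Field 𝔽] (n : ℕ) (i j : Fin n) : Matrix (Fin n) (Fin n) 𝔽 :=
  Matrix.single i j 1

/-- The trigonometric R-matrix
`R(t,s) = ((t+s)/(s−t))·Σ_k E_{kk}⊗E_{kk}
        + (2/(s−t))·Σ_{l<m} (t·E_{lm}⊗E_{ml} + s·E_{ml}⊗E_{lm})`,
acting on the tensor square indexed by pairs `(i,j) ∈ {1,…,n}²` with the
Kronecker convention `(X⊗Y)_{(i,j),(k,l)} = X_{ik}·Y_{jl}`. -/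
def trigR {𝔽 : Type*} [Field 𝔽] (n : ℕ) (t s : 𝔽) :
    Matrix (Fin n × Fin n) (Fin n × Fin n) 𝔽 :=
  ((t + s) / (s - t)) •
      ∑ k : Fin n, (matrixUnit n k k) ⊗ₖ (matrixUnit n k k)
    + (2 / (s - t)) •
      ∑ l : Fin n, ∑ m : Fin n,
        if l < m then
          t • ((matrixUnit n l m) ⊗ₖ (matrixUnit n m l))
            + s • ((matrixUnit n m l) ⊗ₖ (matrixUnit n l m))
        else 0

lemma mat_ite_apply {I J α : Type*} (c : Prop) [Decidable c] (M N : Matrix I J α)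
    (i : I) (j : J) : (if c then M else N) i j = if c then M i j else N i j := by
  split <;> rfl

lemma trigR_col {𝔽 : Type*} [Field 𝔽] {n : ℕ} (t s : 𝔽) (q qb : Fin n) (hq : q < qb)
    (x : Fin n × Fin n) :
    trigR n t s x (q, qb) = if x = (qb, q) then 2 * s / (s - t) else 0 := by
  obtain ⟨a, b⟩ := x
  simp only [trigR, matrixUnit, Matrix.add_apply, Matrix.smul_apply, Matrix.sum_apply,
    mat_ite_apply, Matrix.kroneckerMap_apply, Matrix.single, Matrix.of_apply,
    Matrix.zero_apply, smul_eq_mul, mul_ite, mul_one, mul_zero, ite_mul, zero_mul,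
    Prod.mk.injEq]
  have h1 : (∑ x : Fin n, if x = b ∧ x = qb then if x = a ∧ x = q then (1:𝔽) else 0 else 0)
      = 0 := by
    apply Finset.sum_eq_zero; rintro x -
    split_ifs with h1 h2 <;> first | rfl | (exfalso; omega)
  have h2 : (∑ x : Fin n, ∑ x_1 : Fin n,
      if x < x_1 then
        (if x_1 = b ∧ x = qb then if x = a ∧ x_1 = q then t else 0 else 0) +
          if x = b ∧ x_1 = qb then if x_1 = a ∧ x = q then s else 0 else 0
      else 0)
      = if a = qb ∧ b = q then s else 0 := by
    have : ∀ x x_1 : Fin n,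
        (if x < x_1 then
          (if x_1 = b ∧ x = qb then if x = a ∧ x_1 = q then t else 0 else 0) +
            if x = b ∧ x_1 = qb then if x_1 = a ∧ x = q then s else 0 else 0
        else 0)
        = if x = q then (if x_1 = qb then (if a = qb ∧ b = q then s else 0) else 0) else 0 := by
      intro x x_1
      split_ifs <;> first | rfl | (exfalso; omega) | (simp_all; omega) | simp_all
    simp only [this, Finset.sum_ite_irrel, Finset.sum_const_zero, Finset.sum_ite_eq', Finset.mem_univ, if_true]
  rw [h1, h2]
  split_ifs with h <;> field_simp <;> ring

lemma trigR_row {𝔽 : Type*} [Field 𝔽] {n : ℕ} (t s : 𝔽) (p pb : Fin n) (hp : p < pb)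
    (y : Fin n × Fin n) :
    trigR n t s (p, pb) y = if y = (pb, p) then 2 * t / (s - t) else 0 := by
  obtain ⟨c, d⟩ := y
  simp only [trigR, matrixUnit, Matrix.add_apply, Matrix.smul_apply, Matrix.sum_apply,
    mat_ite_apply, Matrix.kroneckerMap_apply, Matrix.single, Matrix.of_apply,
    Matrix.zero_apply, smul_eq_mul, mul_ite, mul_one, mul_zero, ite_mul, zero_mul,
    Prod.mk.injEq]
  have h1 : (∑ x : Fin n, if x = pb ∧ x = d then if x = p ∧ x = c then (1:𝔽) else 0 else 0)
      = 0 := by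
    apply Finset.sum_eq_zero; rintro x -
    split_ifs <;> first | rfl | (exfalso; omega)
  have h2 : (∑ x : Fin n, ∑ x_1 : Fin n,
      if x < x_1 then
        (if x_1 = pb ∧ x = d then if x = p ∧ x_1 = c then t else 0 else 0) +
          if x = pb ∧ x_1 = d then if x_1 = p ∧ x = c then s else 0 else 0
      else 0)
      = if c = pb ∧ d = p then t else 0 := by
    have : ∀ x x_1 : Fin n,
        (if x < x_1 then
          (if x_1 = pb ∧ x = d then if x = p ∧ x_1 = c then t else 0 else 0) +
            if x = pb ∧ x_1 = d then if x_1 = p ∧ x = c then s else 0 else 0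
        else 0)
        = if x = p then (if x_1 = pb then (if c = pb ∧ d = p then t else 0) else 0) else 0 := by
      intro x x_1
      split_ifs <;> first | rfl | (exfalso; omega) | simp_all | (simp_all; omega)
    simp only [this, Finset.sum_ite_irrel, Finset.sum_const_zero, Finset.sum_ite_eq',
      Finset.mem_univ, if_true]
  rw [h1, h2]
  split_ifs with h <;> field_simp <;> ring

/-- The entrywise Sklyanin bracket `C = (A⊗B)·R(t,s) − R(t,s)·(A⊗B)`. -/
def sklyaninC {𝔽 : Type*} [Field 𝔽] (n : ℕ) (A B : Matrix (Fin n) (Fin n) 𝔽)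
    (t s : 𝔽) : Matrix (Fin n × Fin n) (Fin n × Fin n) 𝔽 :=
  (A ⊗ₖ B) * trigR n t s - trigR n t s * (A ⊗ₖ B)

/-- Entry `((p,p̄),(q,q̄))`, `p < p̄`, `q < q̄`, of the Sklyanin bracket:
`{a_{pq}(t), a_{p̄q̄}(s)} = 2(t a_{pq̄}(s) a_{p̄q}(t) − s a_{pq̄}(t) a_{p̄q}(s))/(t−s)`. -/
theorem sklyanin_entry_pq_lt {n : ℕ} (hn : 1 ≤ n) {𝔽 : Type*} [Field 𝔽]
    (t s : 𝔽) (hts : t ≠ s) (A B : Matrix (Fin n) (Fin n) 𝔽)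
    (p pb q qb : Fin n) (hp : p < pb) (hq : q < qb) :
    sklyaninC n A B t s (p, pb) (q, qb)
      = 2 * (t * B p qb * A pb q - s * A p qb * B pb q) / (t - s) := by
  have hst : s - t ≠ 0 := sub_ne_zero.mpr (Ne.symm hts)
  simp only [sklyaninC, Matrix.sub_apply, Matrix.mul_apply,
    trigR_col t s q qb hq, trigR_row t s p pb hp, mul_ite, ite_mul, mul_zero, zero_mul,
    Finset.sum_ite_eq, Finset.sum_ite_eq', Finset.mem_univ, if_true,
    Matrix.kroneckerMap_apply]
  have h2 : t - s ≠ 0 := sub_ne_zero.mpr hts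
  field_simp [hst, h2]
  ring
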